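/- Let C = C₁η₁ ⊕ ⋯ ⊕ C₅η₅ be a cyclic code of length n over R with C = ⟨g(x)⟩ and component generators g₁,...,g₅. Then C⊥ ⊆ C if and only if for every i ∈ {1,...,5}, xⁿ - 1 ≡ 0 (mod gᵢ(x)·gᵢ*(x)). -/

import Mathlib

open Polynomial

set_option synthInstance.maxHeartbeats 1000000
set_option maxHeartbeats 1000000

section Scalar
variable {F : Type*} [Field F] {n : ℕ}

/-- coefficient-vector-to-polynomial map -/
noncomputable def Pc (c : Fin n → F) : F[X] := ∑ j, Polynomial.C (c j) * (X : F[X]) ^ (j : ℕ)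

lemma Pc_coeff (c : Fin n → F) (k : ℕ) :
    (Pc c).coeff k = if h : k < n then c ⟨k, h⟩ else 0 := by
  rw [Pc, finset_sum_coeff]
  split_ifs with h
  · rw [Finset.sum_eq_single (⟨k, h⟩ : Fin n)]
    · simp
    · intro b _ hb
      rw [coeff_C_mul, coeff_X_pow, if_neg, mul_zero]
      exact fun hc => hb (by ext; simp [hc.symm])
    · simp
  · apply Finset.sum_eq_zero
    intro b _
    rw [coeff_C_mul, coeff_X_pow, if_neg, mul_zero]
    exact fun hc => h (hc ▸ b.isLt)

lemma Pc_degree_lt (c : Fin n → F) : (Pc c).degree < n := by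
  rw [degree_lt_iff_coeff_zero]
  intro m hm
  rw [Pc_coeff, dif_neg]
  intro h
  exact absurd hm (by simp; exact_mod_cast h)

lemma Pc_natDegree_lt (hn : 0 < n) (c : Fin n → F) : (Pc c).natDegree < n := by
  have := Pc_degree_lt c
  by_cases h : Pc c = 0
  · simp [h, hn]
  · exact_mod_cast (degree_eq_natDegree h ▸ this)

lemma Pc_eq_of_degree_lt (z : F[X]) (hz : z.degree < n) :
    Pc (fun j : Fin n => z.coeff (j : ℕ)) = z := by
  ext k
  rw [Pc_coeff]
  split_ifs with h
  · rfl
  · exact (coeff_eq_zero_of_degree_lt (lt_of_lt_of_le hz (by exact_mod_cast Nat.cast_le.2 (by omega)))).symm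

end Scalar
section Scalar2
variable {F : Type*} [Field F] {n : ℕ}

lemma Pc_rev (y : Fin n → F) : Pc (fun j => y j.rev) = reflect (n - 1) (Pc y) := by
  ext k
  rw [coeff_reflect, Pc_coeff, Pc_coeff]
  rcases lt_or_ge k n with h | h
  · rw [dif_pos h, dif_pos (by rw [revAt_le (by omega)]; omega)]
    congr 1
    ext
    simp [Fin.rev, revAt_le (show k ≤ n - 1 by omega)]
    omega
  · rw [dif_neg (by omega), dif_neg]
    rcases le_or_gt k (n-1) with h2 | h2
    · rw [revAt_le h2]; omega
    · rw [revAt_eq_self_of_lt h2]; omega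

lemma pair_eq (hn : 0 < n) (y c : Fin n → F) :
    ∑ j, y j * c j = (Pc (fun j => y j.rev) * Pc c).coeff (n - 1) := by
  rw [Pc_rev, coeff_mul, Finset.Nat.sum_antidiagonal_eq_sum_range_succ_mk]
  have hrange : (n - 1).succ = n := by omega
  rw [hrange]
  have hL : ∑ j : Fin n, y j * c j
      = ∑ k ∈ Finset.range n, (Pc y).coeff k * (Pc c).coeff k := by
    rw [← Fin.sum_univ_eq_sum_range (fun k => (Pc y).coeff k * (Pc c).coeff k)]
    apply Finset.sum_congr rfl
    intro j _
    rw [Pc_coeff, Pc_coeff, dif_pos j.isLt, dif_pos j.isLt]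
  rw [hL, ← Finset.sum_range_reflect (fun k => (Pc y).coeff k * (Pc c).coeff k) n]
  apply Finset.sum_congr rfl
  intro k hk
  rw [Finset.mem_range] at hk
  rw [coeff_reflect, revAt_le (show k ≤ n - 1 by omega)]

end Scalar2
section Scalar3
variable {F : Type*} [Field F] {n : ℕ}

lemma dual_mem_iff (hn : 0 < n) {g h : F[X]} (hg : g.Monic)
    (hfact : (X : F[X]) ^ n - 1 = g * h) (y : Fin n → F) :
    (∀ c : Fin n → F, g ∣ Pc c → ∑ j, y j * c j = 0) ↔ h ∣ Pc (fun j => y j.rev) := by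
  have hXn : ((X : F[X]) ^ n - 1).Monic := by
    simpa using monic_X_pow_sub_C (1 : F) (by omega : n ≠ 0)
  have hh : h.Monic := hg.of_mul_monic_left (hfact ▸ hXn)
  have hg0 : g ≠ 0 := hg.ne_zero
  have hh0 : h ≠ 0 := hh.ne_zero
  have hdeg : g.natDegree + h.natDegree = n := by
    rw [← natDegree_mul hg0 hh0, ← hfact]
    simpa using natDegree_X_pow_sub_C (n := n) (r := (1 : F))
  set yh : F[X] := Pc (fun j => y j.rev) with hyh
  have hyhdeg : yh.natDegree ≤ n - 1 := by
    rcases eq_or_ne yh 0 with h0 | h0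
    · simp [h0]
    · have := Pc_degree_lt (fun j => y j.rev)
      rw [← hyh, degree_eq_natDegree h0] at this
      exact_mod_cast Nat.le_sub_one_of_lt (by exact_mod_cast this)
  constructor
  · -- hard direction
    intro H
    set W : F[X] := yh * g with hW
    have hWcoeff : ∀ m, g.natDegree ≤ m → m < n → W.coeff m = 0 := by
      intro m hm1 hm2
      set k := n - 1 - m with hk
      have hdegXkg : ((X : F[X]) ^ k * g).degree < (n : WithBot ℕ) := by
        rw [degree_mul, degree_X_pow, degree_eq_natDegree hg0]
        exact_mod_cast (by omega : k + g.natDegree < n)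
      have hc := H (fun j => ((X : F[X]) ^ k * g).coeff (j : ℕ)) ?_
      · rw [pair_eq hn, Pc_eq_of_degree_lt _ hdegXkg, ← hyh] at hc
        have : yh * ((X : F[X]) ^ k * g) = W * X ^ k := by rw [hW]; ring
        rw [this, coeff_mul_X_pow', if_pos (by omega : k ≤ n - 1)] at hc
        rwa [(by omega : n - 1 - k = m)] at hc
      · rw [Pc_eq_of_degree_lt _ hdegXkg]
        exact ⟨X ^ k, mul_comm _ _⟩
    set a : F[X] := W %ₘ (X ^ n) with hadef
    set b : F[X] := W /ₘ (X ^ n) with hbdef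
    have hab : a + X ^ n * b = W := modByMonic_add_div W (X ^ n)
    have hadeglt : a.degree < ((n : ℕ) : WithBot ℕ) := by
      simpa [degree_X_pow] using degree_modByMonic_lt W (monic_X_pow n)
    have hacoeff : ∀ m, g.natDegree ≤ m → a.coeff m = 0 := by
      intro m hm
      rcases lt_or_ge m n with hmn | hmn
      · have h1 : W.coeff m = a.coeff m + (X ^ n * b).coeff m := by rw [← hab]; simp
        have h2 : ((X : F[X]) ^ n * b).coeff m = 0 := by
          rw [mul_comm, coeff_mul_X_pow', if_neg (by omega)]
        have h3 := hWcoeff m hm hmn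
        rw [h3, h2, add_zero] at h1
        exact h1.symm
      · exact coeff_eq_zero_of_degree_lt (lt_of_lt_of_le hadeglt (by exact_mod_cast hmn))
    have hadeg : a.degree < g.degree := by
      rw [degree_eq_natDegree hg0, degree_lt_iff_coeff_zero]
      exact fun m hm => hacoeff m hm
    have hbdeg : b.degree < g.degree := by
      rcases eq_or_ne b 0 with hb0 | hb0
      · rw [hb0, degree_zero, degree_eq_natDegree hg0]
        exact bot_lt_iff_ne_bot.2 (by simp)
      · have h1 : (X : F[X]) ^ n * b = W - a := by rw [← hab]; ring
        have h2 : n + b.natDegree ≤ max W.natDegree a.natDegree := by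
          calc n + b.natDegree = ((X : F[X]) ^ n * b).natDegree := by
                rw [natDegree_mul (pow_ne_zero _ X_ne_zero) hb0, natDegree_X_pow]
            _ = (W - a).natDegree := by rw [h1]
            _ ≤ max W.natDegree a.natDegree := natDegree_sub_le _ _
        have h3 : W.natDegree ≤ n - 1 + g.natDegree :=
          le_trans (natDegree_mul_le) (by omega)
        have h4 : a.natDegree ≤ g.natDegree :=
          natDegree_le_natDegree (le_of_lt hadeg)
        rw [degree_eq_natDegree hb0, degree_eq_natDegree hg0]
        exact_mod_cast (by omega : b.natDegree < g.natDegree)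
    have hdvdW : g ∣ W := ⟨yh, mul_comm _ _⟩
    have hdvdXb : g ∣ ((X : F[X]) ^ n - 1) * b := hfact ▸ ⟨h * b, by ring⟩
    have hWsplit : W = ((X : F[X]) ^ n - 1) * b + (a + b) := by rw [← hab]; ring
    have hdvdab : g ∣ a + b := (dvd_add_right hdvdXb).mp (hWsplit ▸ hdvdW)
    have hab0 : a + b = 0 :=
      eq_zero_of_dvd_of_degree_lt hdvdab
        (lt_of_le_of_lt (degree_add_le a b) (max_lt hadeg hbdeg))
    have hWb : W = ((X : F[X]) ^ n - 1) * b := by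
      rw [hWsplit, hab0, add_zero]
    refine ⟨b, mul_left_cancel₀ hg0 ?_⟩
    rw [← mul_comm yh g, ← hW, hWb, hfact]; ring
  · rintro ⟨b, hb⟩ c ⟨m, hm⟩
    rw [pair_eq hn, ← hyh, hb, hm]
    have : h * b * (g * m) = (b * m) * ((X : F[X]) ^ n - 1) := by rw [hfact]; ring
    rw [this, mul_sub, mul_one, coeff_sub, coeff_mul_X_pow', if_neg (by omega)]
    rcases eq_or_ne b 0 with h0 | h0
    · simp [h0]
    rcases eq_or_ne m 0 with h1 | h1
    · simp [h1]
    have hbd : h.natDegree + b.natDegree ≤ n - 1 := by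
      rw [← natDegree_mul hh0 h0, ← hb]; exact hyhdeg
    have hmd : g.natDegree + m.natDegree ≤ n - 1 := by
      rw [← natDegree_mul hg0 h1, ← hm]
      rcases eq_or_ne (Pc c) 0 with h2 | h2
      · rw [hm] at h2; exact absurd h2 (mul_ne_zero hg0 h1)
      · have := Pc_degree_lt c
        rw [degree_eq_natDegree h2] at this
        exact Nat.le_sub_one_of_lt (by exact_mod_cast this)
    rw [zero_sub, neg_eq_zero]
    apply coeff_eq_zero_of_natDegree_lt
    exact lt_of_le_of_lt natDegree_mul_le (by omega)

end Scalar3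
section Scalar4
variable {F : Type*} [Field F] {n : ℕ}

lemma reflect_eq_reverse_mul (p : F[X]) (N : ℕ) (hp : p.natDegree ≤ N) :
    reflect N p = p.reverse * X ^ (N - p.natDegree) := by
  have h1 := reflect_mul p 1 (le_refl p.natDegree)
    (show (1 : F[X]).natDegree ≤ N - p.natDegree by simp)
  rw [mul_one] at h1
  have h2 : p.natDegree + (N - p.natDegree) = N := by omega
  rw [h2] at h1
  rw [h1, Polynomial.reverse]
  congr 1
  rw [← pow_zero (X : F[X]), reflect_monomial, revAt_le (Nat.zero_le _), Nat.sub_zero]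

lemma g_coprime_X_pow {g : F[X]} (hn : 0 < n) (hgdvd : g ∣ (X : F[X]) ^ n - 1) (k : ℕ) :
    IsCoprime g ((X : F[X]) ^ k) := by
  apply IsCoprime.pow_right
  rw [isCoprime_comm, Polynomial.prime_X.coprime_iff_not_dvd, Polynomial.X_dvd_iff]
  intro hc
  have h5 : g.eval 0 ∣ ((X : F[X]) ^ n - 1).eval 0 := eval_dvd hgdvd
  rw [← coeff_zero_eq_eval_zero, hc, zero_dvd_iff] at h5
  simp [zero_pow (by omega : n ≠ 0)] at h5

lemma contain_iff (hn : 0 < n) {g h : F[X]} (hg : g.Monic)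
    (hfact : (X : F[X]) ^ n - 1 = g * h) :
    ({y : Fin n → F | ∀ c : Fin n → F, g ∣ Pc c → ∑ j, y j * c j = 0} ⊆
      {c : Fin n → F | g ∣ Pc c}) ↔ g ∣ h.reverse := by
  have hXn : ((X : F[X]) ^ n - 1).Monic := by
    simpa using monic_X_pow_sub_C (1 : F) (by omega : n ≠ 0)
  have hh : h.Monic := hg.of_mul_monic_left (hfact ▸ hXn)
  have hg0 : g ≠ 0 := hg.ne_zero
  have hh0 : h ≠ 0 := hh.ne_zero
  have hdeg : g.natDegree + h.natDegree = n := by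
    rw [← natDegree_mul hg0 hh0, ← hfact]
    simpa using natDegree_X_pow_sub_C (n := n) (r := (1 : F))
  constructor
  · intro hsub
    rcases Nat.eq_zero_or_pos g.natDegree with hdg | hdg
    · rw [hg.natDegree_eq_zero.mp hdg]
      exact one_dvd _
    · -- use y with yhat = h
      have hhdeglt : h.degree < (n : WithBot ℕ) := by
        rw [degree_eq_natDegree hh0]
        exact_mod_cast (by omega : h.natDegree < n)
      set y : Fin n → F := fun j => h.coeff ((j.rev : Fin n) : ℕ) with hy
      have hyrev : Pc (fun j => y j.rev) = h := by
        have : (fun j : Fin n => y j.rev) = fun j : Fin n => h.coeff (j : ℕ) := by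
          funext j; rw [hy]; simp [Fin.rev_rev]
        rw [this, Pc_eq_of_degree_lt _ hhdeglt]
      have hymem : y ∈ {y : Fin n → F | ∀ c : Fin n → F, g ∣ Pc c → ∑ j, y j * c j = 0} := by
        rw [Set.mem_setOf_eq, dual_mem_iff hn hg hfact, hyrev]
      have hPy : g ∣ Pc y := hsub hymem
      have hPyr : Pc y = h.reverse * X ^ (n - 1 - h.natDegree) := by
        have h1 : Pc y = reflect (n - 1) (Pc (fun j => y j.rev)) := by
          rw [← Pc_rev]
          congr 1; funext j; rw [Fin.rev_rev]
        rw [h1, hyrev, reflect_eq_reverse_mul h (n - 1) (by omega)]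
      rw [hPyr] at hPy
      exact (g_coprime_X_pow hn ⟨h, hfact⟩ (n - 1 - h.natDegree)).dvd_of_dvd_mul_right hPy
  · intro hdvd y hy
    rw [Set.mem_setOf_eq, dual_mem_iff hn hg hfact] at hy
    obtain ⟨b, hb⟩ := hy
    rw [Set.mem_setOf_eq]
    have h1 : Pc y = reflect (n - 1) (Pc (fun j => y j.rev)) := by
      rw [← Pc_rev]; congr 1; funext j; rw [Fin.rev_rev]
    rcases eq_or_ne b 0 with h0 | h0
    · rw [h1, hb, h0, mul_zero]; simp
    · have hsum2 : h.natDegree + b.natDegree ≤ n - 1 := by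
        rw [← natDegree_mul hh0 h0, ← hb]
        have h3 := Pc_degree_lt (fun j => y j.rev)
        rcases eq_or_ne (Pc (fun j => y j.rev)) 0 with h4 | h4
        · simp [h4]
        · rw [degree_eq_natDegree h4] at h3
          exact Nat.le_sub_one_of_lt (by exact_mod_cast h3)
      rw [h1, hb]
      have h2 : (n - 1 : ℕ) = h.natDegree + (n - 1 - h.natDegree) := by omega
      rw [h2, reflect_mul h b le_rfl (by omega)]
      exact Dvd.dvd.mul_right hdvd _

lemma rev_dvd_iff (hn : 0 < n) {g h : F[X]} (hg : g.Monic)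
    (hfact : (X : F[X]) ^ n - 1 = g * h) :
    g ∣ h.reverse ↔ g * g.reverse ∣ (X : F[X]) ^ n - 1 := by
  have hXn : ((X : F[X]) ^ n - 1).Monic := by
    simpa using monic_X_pow_sub_C (1 : F) (by omega : n ≠ 0)
  have hh : h.Monic := hg.of_mul_monic_left (hfact ▸ hXn)
  have hg0 : g ≠ 0 := hg.ne_zero
  have hh0 : h ≠ 0 := hh.ne_zero
  have hrevmul : ((X : F[X]) ^ n - 1).reverse = g.reverse * h.reverse := by
    rw [hfact]
    exact reverse_mul (by
      simp [hg.leadingCoeff, hh.leadingCoeff])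
  have hrevXn : ((X : F[X]) ^ n - 1).reverse = -((X : F[X]) ^ n - 1) := by
    have h1 : ((X : F[X]) ^ n - 1) = (X : F[X]) ^ n + C (-1) * X ^ 0 := by
      simp [sub_eq_add_neg]
    rw [Polynomial.reverse]
    have hnd : ((X : F[X]) ^ n - 1).natDegree = n := by
      simpa using natDegree_X_pow_sub_C (n := n) (r := (1 : F))
    rw [hnd]
    conv_lhs => rw [h1]
    rw [reflect_add, reflect_monomial, reflect_C_mul_X_pow,
      revAt_le (le_refl n), revAt_le (Nat.zero_le n)]
    simp
    ring
  constructor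
  · rintro ⟨u, hu⟩
    have : (X : F[X]) ^ n - 1 = g * g.reverse * (-u) := by
      have h2 : -((X : F[X]) ^ n - 1) = g.reverse * (g * u) := by
        rw [← hrevXn, hrevmul, hu]
      have := congrArg Neg.neg h2
      rw [neg_neg] at this
      rw [this]; ring
    exact ⟨-u, this⟩
  · rintro ⟨u, hu⟩
    have h2 : g.reverse * h.reverse = g.reverse * (g * (-u)) := by
      rw [← hrevmul, hrevXn, hu]; ring
    have h3 : h.reverse = g * (-u) :=
      mul_left_cancel₀ (by simpa using hg0 : g.reverse ≠ 0) h2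
    exact ⟨-u, h3⟩

end Scalar4

/-- The ring `R = F_q[v]/⟨v⁵ - v⟩`. -/
noncomputable abbrev Rring (F : Type*) [Field F] : Type _ :=
  F[X] ⧸ Ideal.span {(X : F[X]) ^ 5 - X}

/-- let `C = C₁η₁ ⊕ ⋯ ⊕ C₅η₅` be a cyclic code of length `n` over `R`
with component (monic) generator polynomials `g₁,...,g₅` dividing `xⁿ-1`. Then
`C⊥ ⊆ C` if and only if for every `i`, `xⁿ - 1 ≡ 0 (mod gᵢ(x)·gᵢ*(x))`, where `gᵢ*`
is the reciprocal polynomial of `gᵢ`. Codes are realized as sets of coefficient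
vectors in `Rⁿ`, and duality is with respect to `x·y = Σ xᵢyᵢ`. -/
theorem stmt18 (p r n : ℕ) (hn : 0 < n) (hp : p.Prime) (hodd : Odd p)
    (h4 : 4 ∣ (p - 1)) (hr : 0 < r)
    (F : Type*) [Field F] [Fintype F] (hcard : Fintype.card F = p ^ r)
    (η : Fin 5 → Rring F)
    (hne : ∀ i, η i ≠ 0) (hidem : ∀ i, η i ^ 2 = η i)
    (horth : ∀ i j, i ≠ j → η i * η j = 0) (hsum : ∑ i, η i = 1)
    (hcrt : ∀ s : Rring F, ∃ b : Fin 5 → F,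
      s = ∑ i, algebraMap F (Rring F) (b i) * η i)
    (g : Fin 5 → F[X])
    (hgmonic : ∀ i, (g i).Monic) (hgdvd : ∀ i, g i ∣ (X : F[X]) ^ n - 1)
    (Ccode : Set (Fin n → Rring F))
    (hCcode : Ccode = {x | ∃ cs : Fin 5 → (Fin n → F),
      (∀ i, g i ∣ (∑ j, Polynomial.C (cs i j) * (X : F[X]) ^ (j : ℕ))) ∧
      x = fun j => ∑ i, algebraMap F (Rring F) (cs i j) * η i}) :
    ({y : Fin n → Rring F | ∀ c ∈ Ccode, ∑ j, y j * c j = 0} ⊆ Ccode) ↔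
      ∀ i : Fin 5, g i * (g i).reverse ∣ (X : F[X]) ^ n - 1 := by
  classical
  have hηmul : ∀ i, η i * η i = η i := fun i => by rw [← sq]; exact hidem i
  have hemul : ∀ b c : Fin 5 → F,
      (∑ i, algebraMap F (Rring F) (b i) * η i) * (∑ i, algebraMap F (Rring F) (c i) * η i)
        = ∑ i, algebraMap F (Rring F) (b i * c i) * η i := by
    intro b c
    rw [Finset.sum_mul_sum]
    apply Finset.sum_congr rfl
    intro i _
    rw [Finset.sum_eq_single i]
    · rw [mul_mul_mul_comm, hηmul, ← map_mul]
    · intro j _ hj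
      rw [mul_mul_mul_comm, horth i j (Ne.symm hj), mul_zero]
    · simp
  let e : (Fin 5 → F) →+* Rring F :=
    { toFun := fun b => ∑ i, algebraMap F (Rring F) (b i) * η i
      map_one' := by simpa using hsum
      map_mul' := fun b c => (hemul b c).symm
      map_zero' := by simp
      map_add' := fun b c => by
        simp only [Pi.add_apply, map_add, add_mul]
        rw [Finset.sum_add_distrib] }
  have heapp : ∀ b : Fin 5 → F, e b = ∑ i, algebraMap F (Rring F) (b i) * η i :=
    fun _ => rfl
  have hcollapse : ∀ (d : Fin 5 → F) (k : Fin 5),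
      (e d) * η k = algebraMap F (Rring F) (d k) * η k := by
    intro d k
    rw [heapp, Finset.sum_mul, Finset.sum_eq_single k]
    · rw [mul_assoc, hηmul]
    · intro j _ hj
      rw [mul_assoc, horth j k hj, mul_zero]
    · simp
  have hinj : Function.Injective e := by
    intro b b' hbb'
    funext k
    by_contra hk
    have h2 : algebraMap F (Rring F) (b k - b' k) * η k = 0 := by
      rw [map_sub, sub_mul, ← hcollapse b, ← hcollapse b', hbb', sub_self]
    have hu : IsUnit (algebraMap F (Rring F) (b k - b' k)) :=
      IsUnit.map _ (isUnit_iff_ne_zero.2 (sub_ne_zero.2 hk))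
    exact hne k ((hu.mul_right_eq_zero).mp h2)
  have hsurj : Function.Surjective e := fun s =>
    ⟨Classical.choose (hcrt s), (Classical.choose_spec (hcrt s)).symm⟩
  let E : (Fin 5 → F) ≃+* Rring F := RingEquiv.ofBijective e ⟨hinj, hsurj⟩
  have hEapp : ∀ b : Fin 5 → F, E b = ∑ i, algebraMap F (Rring F) (b i) * η i :=
    fun _ => rfl
  -- membership characterization
  have hmem : ∀ x : Fin n → Rring F, x ∈ Ccode ↔
      ∀ i, g i ∣ Pc (fun j => E.symm (x j) i) := by
    intro x
    rw [hCcode]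
    constructor
    · rintro ⟨cs, hdvd, hx⟩ i
      have hxj : ∀ j, E.symm (x j) = fun i => cs i j := by
        intro j
        have h1 : x j = E (fun i => cs i j) := by rw [hx]; rfl
        rw [h1, E.symm_apply_apply]
      have h2 : (fun j => E.symm (x j) i) = fun j => cs i j := by
        funext j; rw [hxj j]
      rw [h2]
      exact hdvd i
    · intro hdvd
      refine ⟨fun i j => E.symm (x j) i, hdvd, ?_⟩
      funext j
      exact (E.apply_symm_apply (x j)).symm
  -- pairing characterization
  have hpair : ∀ y c : Fin n → Rring F,
      (∑ j, y j * c j = 0) ↔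
        ∀ i, (∑ j, E.symm (y j) i * E.symm (c j) i) = 0 := by
    intro y c
    have h1 : ∑ j, y j * c j = E (∑ j, E.symm (y j) * E.symm (c j)) := by
      rw [map_sum]
      apply Finset.sum_congr rfl
      intro j _
      rw [map_mul, E.apply_symm_apply, E.apply_symm_apply]
    rw [h1, show (0 : Rring F) = E 0 from (map_zero E).symm,
      (EquivLike.injective E).eq_iff, funext_iff]
    constructor
    · intro h i
      have := h i
      simpa [Finset.sum_apply] using this
    · intro h i
      simpa [Finset.sum_apply] using h i
  -- dual characterization
  have hdualchar : ∀ y : Fin n → Rring F,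
      (∀ c ∈ Ccode, ∑ j, y j * c j = 0) ↔
        ∀ i, ∀ c' : Fin n → F, g i ∣ Pc c' → ∑ j, E.symm (y j) i * c' j = 0 := by
    intro y
    constructor
    · intro hy i c' hc'
      set x : Fin n → Rring F := fun j => E (fun k => if k = i then c' j else 0) with hxdef
      have hxj : ∀ j k, E.symm (x j) k = if k = i then c' j else 0 := by
        intro j k
        rw [hxdef]
        simp [E.symm_apply_apply]
      have hx : x ∈ Ccode := by
        rw [hmem]
        intro k
        by_cases hk : k = i
        · subst hk
          have h2 : (fun j => E.symm (x j) k) = c' := by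
            funext j; rw [hxj j k, if_pos rfl]
          rw [h2]; exact hc'
        · have h2 : (fun j => E.symm (x j) k) = fun _ => (0 : F) := by
            funext j; rw [hxj j k, if_neg hk]
          rw [h2]
          have h3 : Pc (fun _ : Fin n => (0 : F)) = 0 := by simp [Pc]
          rw [h3]; exact dvd_zero _
      have h4 := (hpair y x).mp (hy x hx) i
      have h5 : (fun j => E.symm (y j) i * E.symm (x j) i)
          = fun j => E.symm (y j) i * c' j := by
        funext j; rw [hxj j i, if_pos rfl]
      calc ∑ j, E.symm (y j) i * c' j
          = ∑ j, E.symm (y j) i * E.symm (x j) i := by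
            apply Finset.sum_congr rfl; intro j _; rw [hxj j i, if_pos rfl]
        _ = 0 := h4
    · intro hy c hc
      rw [hpair]
      intro i
      exact hy i _ ((hmem c).mp hc i)
  constructor
  · intro hsub i
    obtain ⟨h, hfact⟩ := hgdvd i
    rw [← rev_dvd_iff hn (hgmonic i) hfact, ← contain_iff hn (hgmonic i) hfact]
    intro y' hy'
    rw [Set.mem_setOf_eq] at hy'
    set Y : Fin n → Rring F := fun j => E (fun k => if k = i then y' j else 0) with hYdef
    have hYj : ∀ j k, E.symm (Y j) k = if k = i then y' j else 0 := by
      intro j k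
      rw [hYdef]
      simp [E.symm_apply_apply]
    have hYdual : Y ∈ {y : Fin n → Rring F | ∀ c ∈ Ccode, ∑ j, y j * c j = 0} := by
      rw [Set.mem_setOf_eq, hdualchar]
      intro k c' hc'
      by_cases hk : k = i
      · subst hk
        calc ∑ j, E.symm (Y j) k * c' j = ∑ j, y' j * c' j := by
              apply Finset.sum_congr rfl; intro j _; rw [hYj j k, if_pos rfl]
          _ = 0 := hy' c' hc'
      · calc ∑ j, E.symm (Y j) k * c' j = ∑ j : Fin n, (0 : F) := by
              apply Finset.sum_congr rfl; intro j _
              rw [hYj j k, if_neg hk, zero_mul]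
          _ = 0 := by simp
    have hYC := hsub hYdual
    have h6 := (hmem Y).mp hYC i
    rw [Set.mem_setOf_eq]
    have h7 : (fun j => E.symm (Y j) i) = y' := by
      funext j; rw [hYj j i, if_pos rfl]
    rwa [h7] at h6
  · intro hI y hy
    rw [Set.mem_setOf_eq] at hy
    rw [hmem]
    intro i
    obtain ⟨h, hfact⟩ := hgdvd i
    have hsubF := (contain_iff hn (hgmonic i) hfact).mpr
      ((rev_dvd_iff hn (hgmonic i) hfact).mpr (hI i))
    apply hsubF
    rw [Set.mem_setOf_eq]
    intro c' hc'
    exact (hdualchar y).mp hy i c' hc'
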